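/- Let V be a quasi-projective surface over an algebraically closed field of characteristic zero, and let μ = (1^{α₁}, 2^{α₂}, …, s^{α_s}) be a partition of n. Then the morphism Chow^{α₁}(V) × ⋯ × Chow^{α_s}(V) → Chowⁿ(V) given by (z₁,…,z_s) ↦ z₁ + 2z₂ + ⋯ + s·z_s is the normalization of the closure of the stratum Chowⁿ_μ(V). -/

import Mathlib

/-!
STATEMENT 9: Let `V` be a quasi-projective surface (char 0, algebraically closed base) and
`μ = (1^{α₁},…,s^{α_s})` a partition of `n`.  The addition morphism
`τ_μ : Chow^{α₁}(V) × ⋯ × Chow^{α_s}(V) → Chowⁿ(V)`, `(z₁,…,z_s) ↦ z₁ + 2z₂ + ⋯ + s·z_s`,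
is the normalization of the closure of the stratum `Chowⁿ_μ(V)`.

We formalize the basic case `V = 𝔸²` (to which the relative statement is reduced in the
paper).  Ring-theoretically: let `Aₙ = k[Vⁿ]^{𝔖ₙ}` (coordinates of `Chowⁿ(V)`),
`A_α = k[V^ι]^{𝔖_{α₁}×⋯×𝔖_{α_s}}` with `ι = Σᵢ Fin αᵢ` (coordinates of `∏ᵢ Chow^{αᵢ}(V)`),
and let `τ_μ* : Aₙ → A_α` be induced by the "duplication" `k[Vⁿ] → k[V^ι]` renaming the
`n` points along a map `e : Fin n → ι` hitting `(i, j)` exactly `i+1` times.  Let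
`R₀ = τ_μ*(Aₙ) ⊆ A_α`.  Being the normalization of the closure of the stratum means:
(1) `R₀ ⊆ A_α`;
(2) the kernel of `τ_μ*` is the ideal of the stratum (so `Spec R₀` is the closure of the
    stratum): an invariant polynomial is killed by `τ_μ*` iff it vanishes on all cycles
    `Σ (i+1)·z_{ij}` with `z : ι → 𝔸²` injective;
(3) `A_α` is integral over `R₀`;
(4) `A_α` and `R₀` have the same fraction field: every element of `A_α` is a fraction of
    elements of `R₀`;
(5) `A_α` is integrally closed in its fraction field.
-/

open MvPolynomial

/-- `𝔖ₙ`-invariants of `k[x_{j,l}]`: the coordinate ring of `Chowⁿ(𝔸^d)`. -/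
noncomputable def chowInvariants (k : Type*) [CommRing k] (n d : ℕ) :
    Subalgebra k (MvPolynomial (Fin n × Fin d) k) where
  carrier := {p | ∀ σ : Equiv.Perm (Fin n), rename (fun q => (σ q.1, q.2)) p = p}
  mul_mem' {a b} ha hb := fun σ => by rw [map_mul, ha σ, hb σ]
  add_mem' {a b} ha hb := fun σ => by rw [map_add, ha σ, hb σ]
  one_mem' := fun σ => by rw [map_one]
  zero_mem' := fun σ => by rw [map_zero]
  algebraMap_mem' r := fun σ => by simp [MvPolynomial.algebraMap_eq, rename_C]

/-- Invariants of the block permutation group: the coordinate ring of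
`Chow^{α₁}(𝔸^d) × ⋯ × Chow^{α_s}(𝔸^d)`. -/
noncomputable def blockChowInvariants (k : Type*) [CommRing k] (s : ℕ) (α : Fin s → ℕ)
    (d : ℕ) : Subalgebra k (MvPolynomial ((Σ i : Fin s, Fin (α i)) × Fin d) k) where
  carrier := {p | ∀ σ : Equiv.Perm (Σ i : Fin s, Fin (α i)),
    (∀ j, (σ j).1 = j.1) → rename (fun q => (σ q.1, q.2)) p = p}
  mul_mem' {a b} ha hb := fun σ hσ => by rw [map_mul, ha σ hσ, hb σ hσ]
  add_mem' {a b} ha hb := fun σ hσ => by rw [map_add, ha σ hσ, hb σ hσ]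
  one_mem' := fun σ _ => by rw [map_one]
  zero_mem' := fun σ _ => by rw [map_zero]
  algebraMap_mem' r := fun σ _ => by simp [MvPolynomial.algebraMap_eq, rename_C]

universe u

section AuxLemmas
open Finset


/-- If two maps on a fintype have equinumerous fibers, there is a permutation
intertwining them. -/
lemma exists_perm_comp_eq {β γ : Type*} [Fintype β] [DecidableEq γ] (f g : β → γ)
    (h : ∀ c, (Finset.univ.filter fun b => f b = c).card
        = (Finset.univ.filter fun b => g b = c).card) :
    ∃ π : Equiv.Perm β, ∀ b, g (π b) = f b := by
  classical
  have hc : ∀ c, Fintype.card {b // f b = c} = Fintype.card {b // g b = c} := by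
    intro c
    rw [Fintype.card_subtype, Fintype.card_subtype]
    exact h c
  let ee : ∀ c, {b // f b = c} ≃ {b // g b = c} := fun c => Fintype.equivOfCardEq (hc c)
  refine ⟨(Equiv.sigmaFiberEquiv f).symm.trans
      ((Equiv.sigmaCongrRight ee).trans (Equiv.sigmaFiberEquiv g)), fun b => ?_⟩
  exact (ee (f b) ⟨b, rfl⟩).2

/-- lifting a block permutation along `e` -/
lemma lift_perm {s n : ℕ} {α : Fin s → ℕ} (e : Fin n → Σ i : Fin s, Fin (α i))
    (he : ∀ p : Σ i : Fin s, Fin (α i),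
      (Finset.univ.filter fun j : Fin n => e j = p).card = p.1.1 + 1)
    (σb : Equiv.Perm (Σ i : Fin s, Fin (α i))) (hb : ∀ p, (σb p).1 = p.1) :
    ∃ π : Equiv.Perm (Fin n), ∀ j, e (π j) = σb (e j) := by
  apply exists_perm_comp_eq (f := fun j => σb (e j)) (g := e)
  intro c
  have h1 : (Finset.univ.filter fun j => σb (e j) = c)
      = (Finset.univ.filter fun j : Fin n => e j = σb.symm c) := by
    apply Finset.filter_congr
    intro j _
    constructor
    · intro hj; rw [← hj, Equiv.symm_apply_apply]
    · intro hj; rw [hj, Equiv.apply_symm_apply]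
  rw [h1, he, he]
  have h2 := hb (σb.symm c)
  rw [Equiv.apply_symm_apply] at h2
  rw [← h2]

/-- descending a "good" permutation along `e` -/
lemma descend_perm {s n : ℕ} {α : Fin s → ℕ} (e : Fin n → Σ i : Fin s, Fin (α i))
    (he : ∀ p : Σ i : Fin s, Fin (α i),
      (Finset.univ.filter fun j : Fin n => e j = p).card = p.1.1 + 1)
    (σ : Equiv.Perm (Fin n))
    (hgood : ∀ j j', e (σ j) = e (σ j') → e j = e j') :
    ∃ σb : Equiv.Perm (Σ i : Fin s, Fin (α i)),
      (∀ p, (σb p).1 = p.1) ∧ ∀ j, e (σ j) = σb (e j) := by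
  have hesurj : Function.Surjective e := by
    intro p
    have hcard := he p
    have hne : (Finset.univ.filter fun j : Fin n => e j = p).Nonempty := by
      rw [← Finset.card_pos, hcard]; omega
    obtain ⟨j, hj⟩ := hne
    exact ⟨j, (Finset.mem_filter.mp hj).2⟩
  set r := Function.surjInv hesurj with hr_def
  have hr : ∀ p, e (r p) = p := fun p => Function.surjInv_eq hesurj p
  set ψ : (Σ i : Fin s, Fin (α i)) → (Σ i : Fin s, Fin (α i)) :=
    fun p => e (σ⁻¹ (r p)) with hψ_def
  have hkey : ∀ j, ψ (e (σ j)) = e j := by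
    intro j
    have h2 : e (σ (σ⁻¹ (r (e (σ j))))) = e (σ j) := by
      rw [Equiv.Perm.inv_def, Equiv.apply_symm_apply, hr]
    exact hgood _ _ h2
  have hsurj : Function.Surjective ψ := by
    intro q
    obtain ⟨j, rfl⟩ := hesurj q
    exact ⟨e (σ j), hkey j⟩
  have hbij : Function.Bijective ψ := Finite.surjective_iff_bijective.mp hsurj
  set ψe := Equiv.ofBijective ψ hbij with hψe
  have hψapp : ∀ p, ψe p = ψ p := fun p => rfl
  refine ⟨ψe.symm, ?_, ?_⟩
  · -- block preservation
    have hψblock : ∀ p, (ψ p).1 = p.1 := by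
      intro p
      have hfil : (Finset.univ.filter fun j : Fin n => e j = ψ p)
          = (Finset.univ.filter fun j : Fin n => e (σ j) = p) := by
        apply Finset.filter_congr
        intro j _
        constructor
        · intro hj
          have := hkey j
          rw [hj] at this
          exact hbij.1 this
        · intro hj
          rw [← hkey j, hj]
      have hcard1 : (Finset.univ.filter fun j : Fin n => e (σ j) = p).card
          = (Finset.univ.filter fun j : Fin n => e j = p).card := by
        apply Finset.card_bij' (fun j _ => σ j) (fun j _ => σ⁻¹ j)
        · intro j hj
          simp only [Finset.mem_filter, Finset.mem_univ, true_and] at hj ⊢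
          exact hj
        · intro j hj
          simp only [Finset.mem_filter, Finset.mem_univ, true_and] at hj ⊢
          rw [Equiv.Perm.inv_def, Equiv.apply_symm_apply]
          exact hj
        · intro j _; exact σ.symm_apply_apply j
        · intro j _; exact σ.apply_symm_apply j
      have hcc := he (ψ p)
      rw [hfil, hcard1, he p] at hcc
      exact Fin.val_injective (by omega)
    intro p
    have hbp := hψblock (ψe.symm p)
    have h3 : ψ (ψe.symm p) = p := ψe.apply_symm_apply p
    rw [h3] at hbp
    exact hbp.symm
  · intro j
    have : ψe (e (σ j)) = e j := hkey j
    rw [← this, Equiv.symm_apply_apply]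


/-- A polynomial vanishing at all points with pairwise distinct first coordinates is zero. -/
lemma eval_zero_of_vanish {k : Type*} [Field k] [CharZero k] {ι : Type*} [Fintype ι]
    [DecidableEq ι] (g : MvPolynomial (ι × Fin 2) k)
    (h : ∀ w : ι × Fin 2 → k, (∀ p q : ι, p ≠ q → w (p, 0) ≠ w (q, 0)) → eval w g = 0) :
    g = 0 := by
  classical
  set h₀ : MvPolynomial (ι × Fin 2) k :=
    ∏ pq ∈ Finset.univ.offDiag, (X (pq.1, (0 : Fin 2)) - X (pq.2, 0)) with hh₀def
  have hh0 : h₀ ≠ 0 := by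
    rw [hh₀def]
    apply Finset.prod_ne_zero_iff.mpr
    intro pq hpq
    have hne : (pq.1, (0 : Fin 2)) ≠ (pq.2, 0) := by
      intro hcontra
      exact (Finset.mem_offDiag.mp hpq).2.2 (congrArg Prod.fst hcontra)
    intro hzero
    have : X (R := k) (pq.1, (0 : Fin 2)) = X (pq.2, 0) := sub_eq_zero.mp hzero
    exact hne (MvPolynomial.X_injective this)
  have key : g * h₀ = 0 := by
    apply MvPolynomial.funext
    intro w
    rw [map_mul, map_zero]
    by_cases hd : ∀ p q : ι, p ≠ q → w (p, 0) ≠ w (q, 0)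
    · rw [h w hd, zero_mul]
    · push_neg at hd
      obtain ⟨p, q, hpq, heq⟩ := hd
      have : eval w h₀ = 0 := by
        rw [hh₀def, map_prod]
        apply Finset.prod_eq_zero (i := (p, q)) (Finset.mem_offDiag.mpr ⟨Finset.mem_univ _, Finset.mem_univ _, hpq⟩)
        rw [map_sub, eval_X, eval_X, heq, sub_self]
      rw [this, mul_zero]
  rcases mul_eq_zero.mp key with h1 | h1
  · exact h1
  · exact absurd h1 hh0

set_option maxHeartbeats 1000000 in
set_option synthInstance.maxHeartbeats 400000 in
lemma blockChowInvariants_isIntegrallyClosed (k : Type*) [Field k] (s : ℕ)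
    (α : Fin s → ℕ) (d : ℕ) :
    IsIntegrallyClosed ↥(blockChowInvariants k s α d) := by
  classical
  set A := blockChowInvariants k s α d with hA
  set S := MvPolynomial ((Σ i : Fin s, Fin (α i)) × Fin d) k with hS
  set K := FractionRing S with hK
  have hginj : Function.Injective ((algebraMap S K).comp ((Subalgebra.val A).toRingHom)) := by
    have hco : ⇑((algebraMap S K).comp ((Subalgebra.val A).toRingHom))
        = ⇑(algebraMap S K) ∘ (Subtype.val : ↥A → S) := rfl
    rw [hco]
    exact (IsFractionRing.injective S K).comp Subtype.val_injective
  set φ : FractionRing ↥A →+* K := IsFractionRing.lift hginj with hφ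
  refine (isIntegrallyClosed_iff (FractionRing ↥A)).mpr ?_
  intro x hx
  obtain ⟨p, hpm, hpe⟩ := hx
  have hφint : IsIntegral S (φ x) := by
    refine ⟨p.map (Subalgebra.val A).toRingHom, hpm.map _, ?_⟩
    rw [Polynomial.eval₂_map]
    have hcomp : (algebraMap S K).comp (Subalgebra.val A).toRingHom
        = φ.comp (algebraMap ↥A (FractionRing ↥A)) := by
      ext a
      rw [RingHom.comp_apply, RingHom.comp_apply, hφ, IsFractionRing.lift_algebraMap]
      rfl
    rw [hcomp, ← Polynomial.hom_eval₂, hpe, map_zero]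
  obtain ⟨y, hy⟩ := IsIntegrallyClosed.isIntegral_iff.mp hφint
  -- the integral element is invariant, hence lies in A
  have hyA : y ∈ A := by
    intro σ hσ
    set Ee := MvPolynomial.renameEquiv k (Equiv.prodCongr σ (Equiv.refl (Fin d))) with hEe
    have hginj2 : Function.Injective ((algebraMap S K).comp Ee.toAlgHom.toRingHom) := by
      have hco : ⇑((algebraMap S K).comp Ee.toAlgHom.toRingHom)
          = ⇑(algebraMap S K) ∘ ⇑Ee := rfl
      rw [hco]
      exact (IsFractionRing.injective S K).comp Ee.injective
    set Ψ : K →+* K := IsFractionRing.lift hginj2 with hΨ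
    have hΨa : ∀ t : S, Ψ (algebraMap S K t) = algebraMap S K (Ee t) := by
      intro t
      rw [hΨ, IsFractionRing.lift_algebraMap]
      rfl
    have hfix : ∀ a : ↥A, Ee (a : S) = (a : S) := by
      intro a
      have h2 := a.2 σ hσ
      rw [hEe, renameEquiv_apply]
      exact h2
    have hΨx : Ψ (φ x) = φ x := by
      obtain ⟨aa, bb, hbb, hzz⟩ := IsFractionRing.div_surjective (A := ↥A) x
      rw [← hzz, map_div₀ φ, hφ, IsFractionRing.lift_algebraMap, IsFractionRing.lift_algebraMap,
        map_div₀ Ψ]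
      have h3 : ((algebraMap S K).comp ((Subalgebra.val A).toRingHom)) aa = algebraMap S K (aa : S) := rfl
      have h4 : ((algebraMap S K).comp ((Subalgebra.val A).toRingHom)) bb = algebraMap S K (bb : S) := rfl
      rw [h3, h4, hΨa, hΨa, hfix, hfix]
    have h7 : algebraMap S K (Ee y) = algebraMap S K y := by
      rw [← hΨa y, hy]
      exact hΨx
    have h8 : Ee y = y := IsFractionRing.injective S K h7
    rw [hEe, renameEquiv_apply] at h8
    exact h8
  refine ⟨⟨y, hyA⟩, ?_⟩
  apply φ.injective
  rw [hφ, IsFractionRing.lift_algebraMap]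
  exact hy

end AuxLemmas

/-- `τ_μ` is the normalization of the closure of the stratum
`Chowⁿ_μ(𝔸²)`. -/
theorem tau_mu_is_normalization_of_stratum_closure
    (k : Type u) [Field k] [IsAlgClosed k] [CharZero k]
    (s n : ℕ) (α : Fin s → ℕ) (hn : ∑ i : Fin s, (i.1 + 1) * α i = n)
    (e : Fin n → Σ i : Fin s, Fin (α i))
    (he : ∀ p : Σ i : Fin s, Fin (α i),
      (Finset.univ.filter fun j : Fin n => e j = p).card = p.1.1 + 1) :
    letI τ : MvPolynomial (Fin n × Fin 2) k →ₐ[k]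
        MvPolynomial ((Σ i : Fin s, Fin (α i)) × Fin 2) k :=
      rename (fun q => (e q.1, q.2))
    letI R₀ : Subalgebra k (MvPolynomial ((Σ i : Fin s, Fin (α i)) × Fin 2) k) :=
      Subalgebra.map τ (chowInvariants k n 2)
    -- (1) the image of `τ_μ*` lands in the invariants
    R₀ ≤ blockChowInvariants k s α 2 ∧
    -- (2) `Spec R₀ ⊆ Chowⁿ(𝔸²)` is the closure of the stratum `Chowⁿ_μ(𝔸²)`
    (∀ f ∈ chowInvariants k n 2, (τ f = 0 ↔
      ∀ z : (Σ i : Fin s, Fin (α i)) → Fin 2 → k, Function.Injective z →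
        MvPolynomial.eval (fun q : Fin n × Fin 2 => z (e q.1) q.2) f = 0)) ∧
    -- (3) `A_α` is integral over `R₀`
    (∀ x ∈ blockChowInvariants k s α 2, IsIntegral ↥R₀ x) ∧
    -- (4) `τ_μ` is birational onto its image: `Frac R₀ = Frac A_α`
    (∀ x ∈ blockChowInvariants k s α 2, ∃ y z_, y ∈ R₀ ∧ z_ ∈ R₀ ∧ z_ ≠ 0 ∧
      z_ * x = y) ∧
    -- (5) `A_α` is normal
    IsIntegrallyClosed ↥(blockChowInvariants k s α 2) := by
  classical
  -- common preparations
  have hesurj : Function.Surjective e := by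
    intro p
    have hcard := he p
    have hne : (Finset.univ.filter fun j : Fin n => e j = p).Nonempty := by
      rw [← Finset.card_pos, hcard]; omega
    obtain ⟨j, hj⟩ := hne
    exact ⟨j, (Finset.mem_filter.mp hj).2⟩
  set r : (Σ i : Fin s, Fin (α i)) → Fin n := Function.surjInv hesurj with hrdef
  have hr : ∀ p, e (r p) = p := fun p => Function.surjInv_eq hesurj p
  refine ⟨?_, ?_, ?_, ?_, ?_⟩
  · -- (1)
    rintro x ⟨f, hf, rfl⟩ σ hσ
    obtain ⟨π, hπ⟩ := lift_perm e he σ hσ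
    show rename (fun q => (σ q.1, q.2)) (rename (fun q => (e q.1, q.2)) f)
        = rename (fun q => (e q.1, q.2)) f
    rw [rename_rename]
    have hcomp : ((fun q : (Σ i : Fin s, Fin (α i)) × Fin 2 => (σ q.1, q.2)) ∘
        (fun q : Fin n × Fin 2 => (e q.1, q.2)))
        = (fun q : Fin n × Fin 2 => (e q.1, q.2)) ∘ (fun q : Fin n × Fin 2 => (π q.1, q.2)) := by
      funext q
      show (σ (e q.1), q.2) = (e (π q.1), q.2)
      rw [hπ q.1]
    rw [hcomp, ← rename_rename, hf π]
  · -- (2)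
    intro f hf
    constructor
    · intro h0 z _
      have heq : (MvPolynomial.eval fun q : Fin n × Fin 2 => z (e q.1) q.2) f
          = MvPolynomial.eval (fun pq : (Σ i : Fin s, Fin (α i)) × Fin 2 => z pq.1 pq.2)
            (rename (fun q : Fin n × Fin 2 => (e q.1, q.2)) f) := by
        rw [eval_rename]
        rfl
      have h0' : rename (fun q : Fin n × Fin 2 => (e q.1, q.2)) f = 0 := h0
      rw [heq, h0', map_zero]
    · intro hv
      show rename (fun q : Fin n × Fin 2 => (e q.1, q.2)) f = 0
      apply eval_zero_of_vanish
      intro w hw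
      have hz : Function.Injective (fun p : (Σ i : Fin s, Fin (α i)) => fun l : Fin 2 => w (p, l)) := by
        intro p q hpq
        by_contra hne
        exact hw p q hne (congrFun hpq 0)
      have := hv _ hz
      rw [eval_rename]
      exact this
  · -- (3)
    intro x _
    set x₀ : MvPolynomial (Fin n × Fin 2) k :=
      rename (fun pl : (Σ i : Fin s, Fin (α i)) × Fin 2 => (r pl.1, pl.2)) x with hx₀
    have hτx₀ : rename (fun q : Fin n × Fin 2 => (e q.1, q.2)) x₀ = x := by
      rw [hx₀, rename_rename]
      have hcmp : ((fun q : Fin n × Fin 2 => (e q.1, q.2)) ∘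
          (fun pl : (Σ i : Fin s, Fin (α i)) × Fin 2 => (r pl.1, pl.2))) = id := by
        funext pl
        show (e (r pl.1), pl.2) = pl
        rw [hr]
      rw [hcmp, rename_id, AlgHom.id_apply]
    set Q : Polynomial (MvPolynomial (Fin n × Fin 2) k) :=
      ∏ σ : Equiv.Perm (Fin n), (Polynomial.X -
        Polynomial.C (rename (fun q : Fin n × Fin 2 => (σ q.1, q.2)) x₀)) with hQ
    have hQm : Q.Monic := Polynomial.monic_prod_of_monic _ _ fun σ _ => Polynomial.monic_X_sub_C _
    have hQmap : ∀ σ₀ : Equiv.Perm (Fin n),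
        Q.map (rename (fun q : Fin n × Fin 2 => (σ₀ q.1, q.2)) :
          MvPolynomial (Fin n × Fin 2) k →ₐ[k] MvPolynomial (Fin n × Fin 2) k).toRingHom = Q := by
      intro σ₀
      rw [hQ, Polynomial.map_prod]
      refine Fintype.prod_equiv (Equiv.mulLeft σ₀) _ _ fun σ => ?_
      rw [Polynomial.map_sub, Polynomial.map_X, Polynomial.map_C]
      congr 2
      show rename (fun q : Fin n × Fin 2 => (σ₀ q.1, q.2))
        (rename (fun q : Fin n × Fin 2 => (σ q.1, q.2)) x₀) = _
      rw [rename_rename]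
      rfl
    have hQcoeff : ∀ m : ℕ, Q.coeff m ∈ chowInvariants k n 2 := by
      intro m σ₀
      have h5 := congrArg (fun P => Polynomial.coeff P m) (hQmap σ₀)
      simp only [Polynomial.coeff_map] at h5
      exact h5
    set τrh := (rename (fun q : Fin n × Fin 2 => (e q.1, q.2)) :
      MvPolynomial (Fin n × Fin 2) k →ₐ[k]
        MvPolynomial ((Σ i : Fin s, Fin (α i)) × Fin 2) k).toRingHom with hτrh
    set Qτ := Q.map τrh with hQτ
    have hQτm : Qτ.Monic := hQm.map _
    have hQτcoeff : ∀ m : ℕ, Qτ.coeff m ∈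
        Subalgebra.map (rename (R := k) fun q : Fin n × Fin 2 => (e q.1, q.2))
          (chowInvariants k n 2) := by
      intro m
      rw [hQτ, Polynomial.coeff_map]
      exact ⟨Q.coeff m, hQcoeff m, rfl⟩
    have hQeval : Q.eval x₀ = 0 := by
      rw [hQ, Polynomial.eval_prod]
      apply Finset.prod_eq_zero (Finset.mem_univ (1 : Equiv.Perm (Fin n)))
      rw [Polynomial.eval_sub, Polynomial.eval_X, Polynomial.eval_C]
      have h1 : (fun q : Fin n × Fin 2 => ((1 : Equiv.Perm (Fin n)) q.1, q.2)) = id := by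
        funext q; rfl
      rw [h1, rename_id, AlgHom.id_apply, sub_self]
    have hQτeval : Qτ.eval x = 0 := by
      rw [hQτ, ← hτx₀]
      show Polynomial.eval (τrh x₀) (Q.map τrh) = 0
      rw [Polynomial.eval_map, Polynomial.eval₂_hom, hQeval, map_zero]
    refine ⟨Qτ.toSubring (Subalgebra.map (rename (R := k) fun q : Fin n × Fin 2 => (e q.1, q.2))
        (chowInvariants k n 2)).toSubring ?_, ?_, ?_⟩
    · intro c hc
      obtain ⟨m, -, hm⟩ := Polynomial.mem_coeffs_iff.mp hc
      rw [hm]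
      exact hQτcoeff m
    · exact (Polynomial.monic_toSubring _ _ _).mpr hQτm
    · rw [show algebraMap
          (↥(Subalgebra.map (rename (R := k) fun q : Fin n × Fin 2 => (e q.1, q.2))
            (chowInvariants k n 2)))
          (MvPolynomial ((Σ i : Fin s, Fin (α i)) × Fin 2) k)
          = (Subalgebra.map (rename (R := k) fun q : Fin n × Fin 2 => (e q.1, q.2))
            (chowInvariants k n 2)).toSubring.subtype from rfl,
        Polynomial.eval₂_eq_eval_map]
      exact (congrArg (Polynomial.eval x) (Polynomial.map_toSubring Qτ _ _)).trans hQτeval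
  · -- (4)
    intro x hx
    set P : Finset (Fin n × Fin n) := Finset.univ.filter (fun jj => e jj.1 ≠ e jj.2) with hP
    set D : MvPolynomial (Fin n × Fin 2) k :=
      ∏ jj ∈ P, (X (jj.1, (0 : Fin 2)) - X (jj.2, 0)) ^ 2 with hD
    set x' : MvPolynomial (Fin n × Fin 2) k :=
      rename (fun pl : (Σ i : Fin s, Fin (α i)) × Fin 2 => (r pl.1, pl.2)) x with hx'
    set F : MvPolynomial (Fin n × Fin 2) k :=
      ∑ σ : Equiv.Perm (Fin n), rename (fun q : Fin n × Fin 2 => (σ q.1, q.2)) (x' * D) with hF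
    set Z : MvPolynomial (Fin n × Fin 2) k :=
      ∑ σ : Equiv.Perm (Fin n), rename (fun q : Fin n × Fin 2 => (σ q.1, q.2)) D with hZ
    have hinv : ∀ u : MvPolynomial (Fin n × Fin 2) k,
        (∑ σ : Equiv.Perm (Fin n), rename (fun q : Fin n × Fin 2 => (σ q.1, q.2)) u)
          ∈ chowInvariants k n 2 := by
      intro u σ₀
      rw [map_sum]
      refine Fintype.sum_equiv (Equiv.mulLeft σ₀) _ _ fun σ => ?_
      rw [rename_rename]
      rfl
    have hτD : ∀ σ : Equiv.Perm (Fin n),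
        rename (fun q : Fin n × Fin 2 => (e q.1, q.2))
          (rename (fun q : Fin n × Fin 2 => (σ q.1, q.2)) D)
        = ∏ jj ∈ P, (X (e (σ jj.1), (0 : Fin 2)) - X (e (σ jj.2), 0)) ^ 2 := by
      intro σ
      rw [rename_rename, hD, map_prod]
      refine Finset.prod_congr rfl fun jj _ => ?_
      rw [map_pow, map_sub, rename_X, rename_X]
      rfl
    have hterm : ∀ σ : Equiv.Perm (Fin n),
        rename (fun q : Fin n × Fin 2 => (e q.1, q.2))
          (rename (fun q : Fin n × Fin 2 => (σ q.1, q.2)) (x' * D))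
        = x * rename (fun q : Fin n × Fin 2 => (e q.1, q.2))
          (rename (fun q : Fin n × Fin 2 => (σ q.1, q.2)) D) := by
      intro σ
      rw [map_mul, map_mul]
      by_cases hgood : ∀ j j', e (σ j) = e (σ j') → e j = e j'
      · obtain ⟨σb, hσb, hcomm⟩ := descend_perm e he σ hgood
        have hx'σ : rename (fun q : Fin n × Fin 2 => (e q.1, q.2))
            (rename (fun q : Fin n × Fin 2 => (σ q.1, q.2)) x') = x := by
          rw [hx', rename_rename, rename_rename]
          have hcmp : (((fun q : Fin n × Fin 2 => (e q.1, q.2)) ∘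
              (fun q : Fin n × Fin 2 => (σ q.1, q.2))) ∘
              (fun pl : (Σ i : Fin s, Fin (α i)) × Fin 2 => (r pl.1, pl.2)))
              = fun pl : (Σ i : Fin s, Fin (α i)) × Fin 2 => (σb pl.1, pl.2) := by
            funext pl
            show (e (σ (r pl.1)), pl.2) = (σb pl.1, pl.2)
            rw [hcomm, hr]
          rw [hcmp]
          exact hx σb hσb
        rw [hx'σ]
      · push_neg at hgood
        obtain ⟨j, j', hjj, hne⟩ := hgood
        have hzero : rename (fun q : Fin n × Fin 2 => (e q.1, q.2))
            (rename (fun q : Fin n × Fin 2 => (σ q.1, q.2)) D) = 0 := by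
          rw [hτD σ]
          apply Finset.prod_eq_zero (i := (j, j'))
          · rw [hP]; exact Finset.mem_filter.mpr ⟨Finset.mem_univ _, hne⟩
          · rw [hjj, sub_self]
            norm_num
        rw [hzero, mul_zero, mul_zero]
    have hτF : rename (fun q : Fin n × Fin 2 => (e q.1, q.2)) F
        = x * rename (fun q : Fin n × Fin 2 => (e q.1, q.2)) Z := by
      rw [hF, hZ, map_sum, map_sum, Finset.mul_sum]
      exact Finset.sum_congr rfl fun σ _ => hterm σ
    have hτZ : rename (fun q : Fin n × Fin 2 => (e q.1, q.2)) Z ≠ 0 := by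
      set a : (Σ i : Fin s, Fin (α i)) → ℚ := fun p => ((Fintype.equivFin _) p : ℕ) with ha
      have hainj : Function.Injective a := by
        intro p q hpq
        apply (Fintype.equivFin _).injective
        exact Fin.val_injective (Nat.cast_injective hpq)
      set w : (Σ i : Fin s, Fin (α i)) × Fin 2 → k :=
        fun pl => if pl.2 = 0 then algebraMap ℚ k (a pl.1) else 0 with hw
      set u : Equiv.Perm (Fin n) → ℚ :=
        fun σ => ∏ jj ∈ P, (a (e (σ jj.1)) - a (e (σ jj.2))) ^ 2 with hu
      have hueval : ∀ σ : Equiv.Perm (Fin n),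
          eval w (rename (fun q : Fin n × Fin 2 => (e q.1, q.2))
            (rename (fun q : Fin n × Fin 2 => (σ q.1, q.2)) D)) = algebraMap ℚ k (u σ) := by
        intro σ
        rw [hτD σ, map_prod, hu, map_prod]
        refine Finset.prod_congr rfl fun jj _ => ?_
        rw [map_pow, map_sub, eval_X, eval_X, map_pow, map_sub]
        simp [hw]
      have hupos : ∀ σ : Equiv.Perm (Fin n), 0 ≤ u σ :=
        fun σ => Finset.prod_nonneg fun jj _ => sq_nonneg _
      have hu1 : 0 < u 1 := by
        rw [hu]
        apply Finset.prod_pos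
        intro jj hjj
        have hne : e jj.1 ≠ e jj.2 := (Finset.mem_filter.mp hjj).2
        have hane : a (e ((1 : Equiv.Perm (Fin n)) jj.1)) - a (e ((1 : Equiv.Perm (Fin n)) jj.2)) ≠ 0 := by
          intro hcon
          exact hne (hainj (sub_eq_zero.mp hcon))
        positivity
      have hsum : 0 < ∑ σ : Equiv.Perm (Fin n), u σ :=
        Finset.sum_pos' (fun σ _ => hupos σ) ⟨1, Finset.mem_univ _, hu1⟩
      intro hcon
      have hev : eval w (rename (fun q : Fin n × Fin 2 => (e q.1, q.2)) Z) = 0 := by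
        rw [hcon, map_zero]
      rw [hZ, map_sum, map_sum, Finset.sum_congr rfl (fun σ _ => hueval σ),
        ← map_sum (algebraMap ℚ k)] at hev
      exact hsum.ne' ((algebraMap ℚ k).injective (by rw [hev, map_zero]))
    refine ⟨rename (fun q : Fin n × Fin 2 => (e q.1, q.2)) F,
            rename (fun q : Fin n × Fin 2 => (e q.1, q.2)) Z,
            ⟨F, hinv (x' * D), rfl⟩, ⟨Z, hinv D, rfl⟩, hτZ, ?_⟩
    rw [hτF, mul_comm]
  · -- (5)
    exact blockChowInvariants_isIntegrallyClosed k s α 2
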